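/- If a graph Γ on a countably infinite vertex set contains a spanning subgraph with the extension property, then Γ is homomorphism-homogeneous: every homomorphism between finite induced subgraphs of Γ extends to a graph homomorphism from Γ to itself. -/
import Mathlib


/-- The extension property characterising the random graph `R`. -/
def SimpleGraph.HasExtensionProperty {V : Type*} (Γ : SimpleGraph V) : Prop :=
  ∀ U W : Finset V, Disjoint U W →
    ∃ z, z ∉ U ∧ z ∉ W ∧ (∀ u ∈ U, Γ.Adj z u) ∧ (∀ w ∈ W, ¬ Γ.Adj z w)

noncomputable section Aux
open scoped Classical

variable {V : Type} (Γ Δ : SimpleGraph V) (A : Finset V) (f : V → V) (e : ℕ → V)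
  (hext : Δ.HasExtensionProperty)

/-- The finite set of required neighbours for the image of `e n`, given the
images `g` chosen so far for earlier indices. -/
def reqSet (n : ℕ) (g : ℕ → V) : Finset V :=
  ((A.filter (fun a => Γ.Adj (e n) a)).image f) ∪
    (((Finset.range n).filter (fun m => Γ.Adj (e n) (e m))).image g)

/-- Pick the image of `e n`. -/
noncomputable def pick (n : ℕ) (g : ℕ → V) : V :=
  if e n ∈ A then f (e n)
  else Classical.choose (hext (reqSet Γ A f e n g) ∅ (Finset.disjoint_empty_right _))

/-- Iteratively constructed approximations. -/
noncomputable def seqG : ℕ → ℕ → V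
  | 0 => fun _ => f (e 0)
  | n + 1 => Function.update (seqG n) n (pick Γ Δ A f e hext n (seqG n))

/-- The final function on indices. -/
noncomputable def finalG (n : ℕ) : V := seqG Γ Δ A f e hext (n + 1) n

lemma seqG_stable : ∀ n m, m < n → seqG Γ Δ A f e hext n m = finalG Γ Δ A f e hext m := by
  intro n
  induction n with
  | zero => intro m hm; exact absurd hm (Nat.not_lt_zero m)
  | succ n ih =>
    intro m hm
    rcases Nat.lt_succ_iff_lt_or_eq.mp hm with hm' | rfl
    · show Function.update (seqG Γ Δ A f e hext n) n
          (pick Γ Δ A f e hext n (seqG Γ Δ A f e hext n)) m = _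
      simp only [Function.update, dif_neg (Nat.ne_of_lt hm')]
      exact ih m hm'
    · rfl

lemma finalG_eq_pick (n : ℕ) :
    finalG Γ Δ A f e hext n = pick Γ Δ A f e hext n (seqG Γ Δ A f e hext n) := by
  simp [finalG, seqG]

lemma finalG_of_mem (n : ℕ) (hn : e n ∈ A) : finalG Γ Δ A f e hext n = f (e n) := by
  rw [finalG_eq_pick, pick, if_pos hn]

lemma finalG_adj_of_not_mem (n : ℕ) (hn : e n ∉ A) :
    ∀ u ∈ reqSet Γ A f e n (seqG Γ Δ A f e hext n), Δ.Adj (finalG Γ Δ A f e hext n) u := by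
  rw [finalG_eq_pick, pick, if_neg hn]
  exact (Classical.choose_spec (hext (reqSet Γ A f e n (seqG Γ Δ A f e hext n)) ∅
    (Finset.disjoint_empty_right _))).2.2.1

end Aux

/-- A countably infinite graph containing a spanning subgraph with the extension
property is homomorphism-homogeneous: every homomorphism between finite induced
subgraphs extends to an endomorphism. -/
theorem spanning_random_homomorphismHomogeneous {V : Type} [Countable V] [Infinite V]
    (Γ : SimpleGraph V) (h : ∃ Δ : SimpleGraph V, Δ ≤ Γ ∧ Δ.HasExtensionProperty) :
    ∀ (A : Finset V) (f : V → V),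
      (∀ x ∈ A, ∀ y ∈ A, Γ.Adj x y → Γ.Adj (f x) (f y)) →
      ∃ g : V → V, (∀ x y : V, Γ.Adj x y → Γ.Adj (g x) (g y)) ∧ ∀ x ∈ A, g x = f x := by
  classical
  obtain ⟨Δ, hle, hext⟩ := h
  intro A f hf
  obtain ⟨E⟩ : Nonempty (V ≃ ℕ) := nonempty_equiv_of_countable
  set e : ℕ → V := fun n => E.symm n with he
  set G : ℕ → V := finalG Γ Δ A f e hext with hG
  -- key adjacency lemma for m < n
  have key : ∀ n m, m < n → Γ.Adj (e n) (e m) → Γ.Adj (G n) (G m) := by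
    intro n m hmn hadj
    by_cases hn : e n ∈ A
    · by_cases hm : e m ∈ A
      · rw [hG, finalG_of_mem _ _ _ _ _ _ _ hn, finalG_of_mem _ _ _ _ _ _ _ hm]
        exact hf _ hn _ hm hadj
      · -- use that G m was picked adjacent to f (e n)
        have : Δ.Adj (G m) (f (e n)) := by
          apply finalG_adj_of_not_mem Γ Δ A f e hext m hm
          apply Finset.mem_union_left
          exact Finset.mem_image_of_mem f (Finset.mem_filter.mpr ⟨hn, hadj.symm⟩)
        rw [hG, finalG_of_mem _ _ _ _ _ _ _ hn]
        exact hle ((hG ▸ this).symm)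
    · have : Δ.Adj (G n) (G m) := by
        by_cases hm : e m ∈ A
        · have := finalG_adj_of_not_mem Γ Δ A f e hext n hn (f (e m))
            (Finset.mem_union_left _
              (Finset.mem_image_of_mem f (Finset.mem_filter.mpr ⟨hm, hadj⟩)))
          rwa [hG, finalG_of_mem _ _ _ _ _ _ _ hm]
        · have hmem : seqG Γ Δ A f e hext n m ∈
              reqSet Γ A f e n (seqG Γ Δ A f e hext n) := by
            apply Finset.mem_union_right
            exact Finset.mem_image_of_mem _
              (Finset.mem_filter.mpr ⟨Finset.mem_range.mpr hmn, hadj⟩)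
          have := finalG_adj_of_not_mem Γ Δ A f e hext n hn _ hmem
          rwa [seqG_stable Γ Δ A f e hext n m hmn] at this
      exact hle this
  refine ⟨fun x => G (E x), ?_, ?_⟩
  · intro x y hxy
    have hx : x = e (E x) := by simp [he]
    have hy : y = e (E y) := by simp [he]
    rcases lt_trichotomy (E x) (E y) with hlt | heq | hlt
    · exact (key (E y) (E x) hlt (by rw [← hx, ← hy]; exact hxy.symm)).symm
    · exfalso; exact hxy.ne (by rw [hx, hy, heq])
    · exact key (E x) (E y) hlt (by rw [← hx, ← hy]; exact hxy)
  · intro x hx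
    have hex : e (E x) = x := by simp [he]
    have hx' : e (E x) ∈ A := by rwa [hex]
    show G (E x) = f x
    rw [hG, finalG_of_mem _ _ _ _ _ _ _ hx', hex]
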